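/- Dodgson condensation formula: if det(A_22) ≠ 0, then det A = (det B · det E − det C · det D) / det A_22, where A_22 = A[{2,...,n-1}], B, C, D, E are the four (n-1)-by-(n-1) corner contiguous submatrices of A. -/

import Mathlib

open Matrix

open Matrix

/-- `A` is totally positive: every minor (with strictly increasing row and
column index selections) is positive. -/
def IsTP {α β : Type} [LinearOrder α] [LinearOrder β] (A : Matrix α β ℝ) : Prop :=
  ∀ (l : ℕ) (r : Fin l → α) (c : Fin l → β), StrictMono r → StrictMono c →
    0 < (A.submatrix r c).det

/-- `A` is `TP_k`: every minor of order at most `k` is positive. -/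
def IsTPk {α β : Type} [LinearOrder α] [LinearOrder β] (A : Matrix α β ℝ) (k : ℕ) : Prop :=
  ∀ (l : ℕ), l ≤ k → ∀ (r : Fin l → α) (c : Fin l → β), StrictMono r → StrictMono c →
    0 < (A.submatrix r c).det

/-- `k`-subsets of `{1,…,n}`, encoded as strictly increasing tuples. -/
abbrev STuple (n k : ℕ) : Type := {f : Fin k → Fin n // StrictMono f}

noncomputable instance lexPi {n k : ℕ} : LinearOrder (Lex (Fin k → Fin n)) :=
  @Pi.Lex.linearOrder (Fin k) (fun _ => Fin n) _
    Finite.to_wellFoundedLT _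

/-- The lexicographic linear order on `k`-subsets. -/
noncomputable instance {n k : ℕ} : LinearOrder (STuple n k) :=
  LinearOrder.lift' (fun s => toLex s.1) (fun _ _ h => Subtype.ext (congrArg ofLex h))

/-- The `k`-th compound matrix of `A`: the matrix of all `k×k` minors of `A`,
rows and columns indexed by `k`-subsets ordered lexicographically. -/
noncomputable def compound {n : ℕ} (A : Matrix (Fin n) (Fin n) ℝ) (k : ℕ) :
    Matrix (STuple n k) (STuple n k) ℝ :=
  fun s t => (A.submatrix s.1 t.1).det

/-- The `k`-th Dodgson condensation matrix of `A`: the `(n-k) × (n-k)` matrix of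
contiguous minors of order `k+1` (0-indexed positions). -/
noncomputable def Dmat {n : ℕ} (A : Matrix (Fin n) (Fin n) ℝ) (k : ℕ) :
    Matrix (Fin (n - k)) (Fin (n - k)) ℝ :=
  fun i j =>
    (A.submatrix
      (fun p : Fin (k + 1) => (⟨i.1 + p.1, by have := i.2; have := p.2; omega⟩ : Fin n))
      (fun p : Fin (k + 1) => (⟨j.1 + p.1, by have := j.2; have := p.2; omega⟩ : Fin n))).det

/-- The contiguous minor of `A` of order `sz` with top-left position `(i, j)`
(0-indexed): `det A[{i,…,i+sz-1},{j,…,j+sz-1}]`. -/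
noncomputable def cminor {n : ℕ} (A : Matrix (Fin n) (Fin n) ℝ) (sz i j : ℕ)
    (hi : i + sz ≤ n) (hj : j + sz ≤ n) : ℝ :=
  (A.submatrix (fun p : Fin sz => (⟨i + p.1, by have := p.2; omega⟩ : Fin n))
               (fun p : Fin sz => (⟨j + p.1, by have := p.2; omega⟩ : Fin n))).det

section DodgsonAux

private def dmid (m : ℕ) : Fin m → Fin (m + 2) := fun i => ⟨i.1 + 1, by omega⟩

private def dedge (m : ℕ) : Fin 2 → Fin (m + 2) :=
  fun j => if j.1 = 0 then 0 else Fin.last (m + 1)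

private def de0 (m : ℕ) : (Fin m ⊕ Fin 1) ≃ Fin (m + 1) where
  toFun := Sum.elim Fin.succ (fun _ => 0)
  invFun j := if hj : j.1 = 0 then Sum.inr 0 else Sum.inl ⟨j.1 - 1, by have := j.2; omega⟩
  left_inv := by
    rintro (i | x)
    · dsimp only [Sum.elim_inl]
      rw [dif_neg (by simp)]
      exact congrArg Sum.inl (Fin.ext (by simp))
    · dsimp only [Sum.elim_inr]
      rw [dif_pos (by simp)]
      exact congrArg Sum.inr (Subsingleton.elim _ _)
  right_inv := by
    intro j
    dsimp only
    by_cases hj : j.1 = 0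
    · rw [dif_pos hj]
      exact (Fin.ext hj.symm : (0 : Fin (m+1)) = j)
    · rw [dif_neg hj]
      exact Fin.ext (by simp; omega)

private def de1 (m : ℕ) : (Fin m ⊕ Fin 1) ≃ Fin (m + 1) := finSumFinEquiv

private def de2 (m : ℕ) : (Fin m ⊕ Fin 2) ≃ Fin (m + 2) where
  toFun := Sum.elim (dmid m) (dedge m)
  invFun j :=
    if h0 : j.1 = 0 then Sum.inr 0
    else if hj : j.1 = m + 1 then Sum.inr 1
    else Sum.inl ⟨j.1 - 1, by have := j.2; omega⟩
  left_inv := by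
    rintro (i | x)
    · dsimp only [Sum.elim_inl]
      rw [dif_neg (by simp [dmid]), dif_neg (by simp [dmid]; omega)]
      exact congrArg Sum.inl (Fin.ext (by simp [dmid]))
    · dsimp only [Sum.elim_inr]
      rcases x with ⟨x, hx⟩
      interval_cases x
      · rw [dif_pos (by simp [dedge])]
        rfl
      · rw [dif_neg (by simp [dedge, Fin.last]), dif_pos (by simp [dedge, Fin.last])]
        rfl
  right_inv := by
    intro j
    dsimp only
    by_cases h0 : j.1 = 0
    · rw [dif_pos h0]
      exact Fin.ext (by simp [dedge]; omega)
    · by_cases h1 : j.1 = m + 1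
      · rw [dif_neg h0, dif_pos h1]
        exact Fin.ext (by simp [dedge, Fin.last]; omega)
      · rw [dif_neg h0, dif_neg h1]
        exact Fin.ext (by simp [dmid]; omega)

private theorem desnanot_jacobi {m : ℕ} (A : Matrix (Fin (m + 2)) (Fin (m + 2)) ℝ)
    (h : (A.submatrix (dmid m) (dmid m)).det ≠ 0) :
    A.det * (A.submatrix (dmid m) (dmid m)).det =
      (A.submatrix Fin.castSucc Fin.castSucc).det * (A.submatrix Fin.succ Fin.succ).det
        - (A.submatrix Fin.castSucc Fin.succ).det * (A.submatrix Fin.succ Fin.castSucc).det := by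
  classical
  set P := A.submatrix (dmid m) (dmid m) with hPdef
  haveI : Invertible P := P.invertibleOfIsUnitDet h.isUnit
  set s : Fin (m + 2) → Fin (m + 2) → ℝ := fun r c =>
    A r c - ∑ l, (∑ k, A r (dmid m k) * (⅟P) k l) * A (dmid m l) c with hs
  set M : Fin (m + 2) → Fin (m + 2) → Matrix (Fin m ⊕ Fin 1) (Fin m ⊕ Fin 1) ℝ := fun r c =>
    fromBlocks P (fun i (_ : Fin 1) => A (dmid m i) c)
      (fun (_ : Fin 1) j => A r (dmid m j)) (fun _ _ => A r c) with hM
  have hMdet : ∀ r c : Fin (m + 2), (M r c).det = P.det * s r c := by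
    intro r c
    simp only [hM]
    erw [Matrix.det_fromBlocks₁₁]
    congr 1
    rw [Matrix.det_fin_one]
    simp [hs, Matrix.mul_apply, Matrix.sub_apply]
    rfl
  -- B
  have hB : (A.submatrix Fin.castSucc Fin.castSucc).submatrix (de0 m) (de0 m)
      = M (dedge m 0) (dedge m 0) := by
    ext (i | i) (j | j) <;>
      simp [hM, de0, hPdef, Matrix.submatrix_apply] <;>
      · congr 1 <;> exact Fin.ext (by simp [dmid, dedge])
  have dB : (A.submatrix Fin.castSucc Fin.castSucc).det = P.det * s (dedge m 0) (dedge m 0) := by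
    rw [← Matrix.det_submatrix_equiv_self (de0 m), hB, hMdet]
  -- E
  have hE : (A.submatrix Fin.succ Fin.succ).submatrix (de1 m) (de1 m)
      = M (dedge m 1) (dedge m 1) := by
    ext (i | i) (j | j) <;>
      simp [hM, de1, hPdef, Matrix.submatrix_apply] <;>
      · congr 1 <;> exact Fin.ext (by simp [dmid, dedge])
  have dE : (A.submatrix Fin.succ Fin.succ).det = P.det * s (dedge m 1) (dedge m 1) := by
    rw [← Matrix.det_submatrix_equiv_self (de1 m), hE, hMdet]
  -- C and D, with sign
  set τ : Equiv.Perm (Fin (m + 1)) := (de0 m).symm.trans (de1 m) with hτ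
  set ε : ℝ := ((Equiv.Perm.sign τ : ℤ) : ℝ) with hε
  have hee : ε * ε = 1 := by
    have h1 : Equiv.Perm.sign τ * Equiv.Perm.sign τ = 1 := Int.units_mul_self _
    rw [hε, ← Int.cast_mul, ← Units.val_mul, h1, Units.val_one, Int.cast_one]
  have hC : (A.submatrix Fin.castSucc Fin.succ).submatrix (de0 m) (de1 m)
      = M (dedge m 0) (dedge m 1) := by
    ext (i | i) (j | j) <;>
      simp [hM, de0, de1, hPdef, Matrix.submatrix_apply] <;>
      · congr 1 <;> exact Fin.ext (by simp [dmid, dedge])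
  have dC : P.det * s (dedge m 0) (dedge m 1) = ε * (A.submatrix Fin.castSucc Fin.succ).det := by
    rw [← hMdet, ← hC]
    have : (A.submatrix Fin.castSucc Fin.succ).submatrix (de0 m) (de1 m)
        = (((A.submatrix Fin.castSucc Fin.succ)).submatrix id ⇑τ).submatrix (de0 m) (de0 m) := by
      ext i j
      simp [hτ]
    rw [this, Matrix.det_submatrix_equiv_self, Matrix.det_permute']
  have hD : (A.submatrix Fin.succ Fin.castSucc).submatrix (de1 m) (de0 m)
      = M (dedge m 1) (dedge m 0) := by
    ext (i | i) (j | j) <;>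
      simp [hM, de0, de1, hPdef, Matrix.submatrix_apply] <;>
      · congr 1 <;> exact Fin.ext (by simp [dmid, dedge])
  have dD : P.det * s (dedge m 1) (dedge m 0) = ε * (A.submatrix Fin.succ Fin.castSucc).det := by
    rw [← hMdet, ← hD]
    have : (A.submatrix Fin.succ Fin.castSucc).submatrix (de1 m) (de0 m)
        = (((A.submatrix Fin.succ Fin.castSucc)).submatrix id ⇑τ⁻¹).submatrix (de1 m) (de1 m) := by
      ext i j
      simp [hτ, Equiv.Perm.inv_def]
    rw [this, Matrix.det_submatrix_equiv_self, Matrix.det_permute']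
    have : ((Equiv.Perm.sign τ⁻¹ : ℤ) : ℝ) = ε := by rw [hε]; norm_num
    simp [Units.smul_def, this, hε]
  -- A itself
  have hA2 : A.submatrix (de2 m) (de2 m)
      = fromBlocks P (fun i j => A (dmid m i) (dedge m j))
          (fun i j => A (dedge m i) (dmid m j)) (fun i j => A (dedge m i) (dedge m j)) := by
    ext (i | i) (j | j) <;> simp [de2, hPdef, Matrix.submatrix_apply, Matrix.fromBlocks]
  have dA : A.det = P.det *
      (s (dedge m 0) (dedge m 0) * s (dedge m 1) (dedge m 1)
        - s (dedge m 0) (dedge m 1) * s (dedge m 1) (dedge m 0)) := by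
    rw [← Matrix.det_submatrix_equiv_self (de2 m), hA2]
    erw [Matrix.det_fromBlocks₁₁]
    congr 1
    rw [Matrix.det_fin_two]
    simp only [Matrix.sub_apply, Matrix.mul_apply, hs]
    rfl
  -- assemble
  rw [dA, dB, dE]
  have hCD : (A.submatrix Fin.castSucc Fin.succ).det * (A.submatrix Fin.succ Fin.castSucc).det
      = (P.det * s (dedge m 0) (dedge m 1)) * (P.det * s (dedge m 1) (dedge m 0)) := by
    rw [dC, dD]
    calc (A.submatrix Fin.castSucc Fin.succ).det * (A.submatrix Fin.succ Fin.castSucc).det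
        = (ε * ε) * ((A.submatrix Fin.castSucc Fin.succ).det
            * (A.submatrix Fin.succ Fin.castSucc).det) := by rw [hee]; ring
      _ = _ := by ring
  rw [hCD]
  ring

end DodgsonAux

/-- **Dodgson condensation formula:** if `det A₂₂ ≠ 0` then
`det A = (det B · det E − det C · det D) / det A₂₂`. -/
theorem dodgson_condensation_formula {m : ℕ} (A : Matrix (Fin (m + 2)) (Fin (m + 2)) ℝ)
    (h : (A.submatrix (fun i : Fin m => (⟨i.1 + 1, by have := i.2; omega⟩ : Fin (m + 2)))
                      (fun j : Fin m => (⟨j.1 + 1, by have := j.2; omega⟩ : Fin (m + 2)))).det ≠ 0) :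
    A.det =
      ((A.submatrix Fin.castSucc Fin.castSucc).det * (A.submatrix Fin.succ Fin.succ).det
        - (A.submatrix Fin.castSucc Fin.succ).det * (A.submatrix Fin.succ Fin.castSucc).det)
      / (A.submatrix (fun i : Fin m => (⟨i.1 + 1, by have := i.2; omega⟩ : Fin (m + 2)))
                     (fun j : Fin m => (⟨j.1 + 1, by have := j.2; omega⟩ : Fin (m + 2)))).det := by
  
  have h' : (A.submatrix (dmid m) (dmid m)).det ≠ 0 := h
  rw [eq_div_iff h]
  exact desnanot_jacobi A h'
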